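/- Let z(r) = z_c + v(r) be a smooth curve in ℂ with Re(z(r)) > 0 and Re(θ - z(r)) > 0, where z_c = θ/2. Then for G(z) = log Γ(z) - log Γ(θ-z) - 2Ψ(z_c)z, d/dr Re(G(z(r))) = 2 Σ_{n=0}^∞ [ -Re(v'(r) v(r)²)(n+z_c)² + Re(v'(r)) |v(r)|⁴ ] / [ (n+z_c) |(n+z_c)² - v(r)²|² ]. -/

import Mathlib

open Filter Topology Set

lemma summable_psi_term (z : ℂ) (hz : 0 < z.re) :
    Summable (fun n : ℕ => 1/((n:ℂ)+1) - 1/((n:ℂ)+z)) := by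
  have key : ∀ n : ℕ, 1/((n:ℂ)+1) - 1/((n:ℂ)+z) = (z - 1)/(((n:ℂ)+1)*((n:ℂ)+z)) := by
    intro n
    have h1 : ((n:ℂ)+1) ≠ 0 := by
      intro h; have := congrArg Complex.re h; simp at this; linarith [Nat.cast_nonneg (α := ℝ) n]
    have h2 : ((n:ℂ)+z) ≠ 0 := by
      intro h; have := congrArg Complex.re h; simp at this; linarith [Nat.cast_nonneg (α := ℝ) n]
    field_simp
    ring
  simp_rw [key]
  apply Summable.of_norm_bounded_eventually (g := fun n : ℕ => ‖z-1‖ * (2 / ((n:ℝ)+1)^2))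
  · apply Summable.mul_left
    apply Summable.mul_left
    have := (summable_nat_add_iff (f := fun n : ℕ => 1/(n:ℝ)^2) 1).mpr (Real.summable_one_div_nat_pow.mpr one_lt_two)
    simpa using this
  · rw [Nat.cofinite_eq_atTop]
    filter_upwards [eventually_ge_atTop 1] with n hn
    have hn1 : (1:ℝ) ≤ n := by exact_mod_cast hn
    have hre : (n:ℝ) ≤ ((n:ℂ)+z).re := by simp; linarith
    have habs : (n:ℝ) ≤ ‖(n:ℂ)+z‖ := le_trans hre (Complex.re_le_norm _)
    have hpos : (0:ℝ) < ‖(n:ℂ)+z‖ := lt_of_lt_of_le (by linarith) habs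
    rw [norm_div, norm_mul]
    have hab1 : ‖(n:ℂ)+1‖ = (n:ℝ)+1 := by
      rw [show ((n:ℂ)+1) = (((n:ℝ)+1 : ℝ):ℂ) by push_cast; ring, Complex.norm_real, Real.norm_eq_abs]
      exact abs_of_pos (by linarith)
    rw [hab1]
    rw [div_le_iff₀ (by positivity)]
    have : ‖z-1‖ * (2 / ((n:ℝ)+1)^2) * (((n:ℝ)+1) * ‖(n:ℂ)+z‖)
        = ‖z-1‖ * (2 * ‖(n:ℂ)+z‖ / ((n:ℝ)+1)) := by
      field_simp
    rw [this]
    have h2 : (1:ℝ) ≤ 2 * ‖(n:ℂ)+z‖ / ((n:ℝ)+1) := by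
      rw [le_div_iff₀ (by linarith)]
      nlinarith
    nlinarith [norm_nonneg (z-1), norm_nonneg ((n:ℂ)+z)]

lemma summable_psi_term_real (x : ℝ) (hx : 0 < x) :
    Summable (fun n : ℕ => 1/((n:ℝ)+1) - 1/((n:ℝ)+x)) := by
  have h := summable_psi_term (x:ℂ) (by simpa using hx)
  rw [show (fun n : ℕ => 1/((n:ℂ)+1) - 1/((n:ℂ)+(x:ℂ)))
      = fun n : ℕ => ((1/((n:ℝ)+1) - 1/((n:ℝ)+x) : ℝ) : ℂ) from funext fun n => by push_cast; ring] at h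
  exact Complex.summable_ofReal.mp h

lemma deriv_log_Gamma_real (x : ℝ) (hx : 0 < x) :
    deriv (Real.log ∘ Real.Gamma) x
      = -Real.eulerMascheroniConstant + ∑' n : ℕ, (1/((n:ℝ)+1) - 1/((n:ℝ)+x)) := by
  set γ := Real.eulerMascheroniConstant
  set f := Real.log ∘ Real.Gamma with hf
  have hc : ConvexOn ℝ (Set.Ioi 0) f := Real.convexOn_log_Gamma
  have hne : ∀ y : ℝ, 0 < y → ∀ m : ℕ, y ≠ -(m:ℝ) := by
    intro y hy m h; have : (0:ℝ) ≤ (m:ℝ) := Nat.cast_nonneg m; linarith [h ▸ hy]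
  have h_rec : ∀ y : ℝ, 0 < y → f (y + 1) = f y + Real.log y := by
    intro y hy
    simp only [f, Function.comp_apply, Real.Gamma_add_one hy.ne',
      Real.log_mul hy.ne' (Real.Gamma_pos_of_pos hy).ne', add_comm]
  have hder : ∀ {y : ℝ}, 0 < y → DifferentiableAt ℝ f y := by
    intro y hy
    exact (Real.differentiableAt_Gamma (hne y hy)).log (Real.Gamma_pos_of_pos hy).ne'
  have hder_rec : ∀ y : ℝ, 0 < y → deriv f (y + 1) = deriv f y + 1 / y := by
    intro y hy
    rw [← deriv_comp_add_const, one_div, ← Real.deriv_log,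
      ← deriv_add (hder (by positivity)) (Real.differentiableAt_log hy.ne')]
    apply Filter.EventuallyEq.deriv_eq
    filter_upwards [eventually_gt_nhds hy] using h_rec
  have hder_shift : ∀ (N : ℕ) (y : ℝ), 0 < y →
      deriv f (y + N) = deriv f y + ∑ k ∈ Finset.range N, 1/(y + k) := by
    intro N
    induction N with
    | zero => intro y hy; simp
    | succ N ih =>
      intro y hy
      have : y + (N + 1 : ℕ) = (y + N) + 1 := by push_cast; ring
      rw [this, hder_rec (y + N) (by positivity), ih y hy, Finset.sum_range_succ]
      ring
  have hderiv_f_one : deriv f 1 = -γ := by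
    rw [hf, Function.comp_def, deriv.log (Real.differentiableAt_Gamma (hne 1 one_pos))
      (by rw [Real.Gamma_one]; norm_num), Real.Gamma_one]
    simp [γ, Real.eulerMascheroniConstant_eq_neg_deriv]
  have harm : ∀ n : ℕ, (harmonic n : ℝ) = ∑ i ∈ Finset.range n, 1/((i:ℝ)+1) := by
    intro n; rw [harmonic]; push_cast; simp [one_div]
  have hpsi_nat : ∀ n : ℕ, deriv f ((n:ℝ) + 1) = -γ + harmonic n := by
    intro n
    have := hder_shift n 1 one_pos
    rw [hderiv_f_one] at this
    rw [show (n:ℝ) + 1 = 1 + (n:ℝ) by ring, this, harm]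
    congr 1
    exact Finset.sum_congr rfl fun i _ => by rw [add_comm]
  have mono : ∀ a b : ℝ, 0 < a → a < b → deriv f a ≤ deriv f b := by
    intro a b ha hab
    have hb : 0 < b := ha.trans hab
    exact (hc.deriv_le_slope (Set.mem_Ioi.mpr ha) (Set.mem_Ioi.mpr hb) hab (hder ha)).trans
      (hc.slope_le_deriv (Set.mem_Ioi.mpr ha) (Set.mem_Ioi.mpr hb) hab (hder hb))
  set m := ⌈x⌉₊ with hm
  have hxm : x < (m:ℝ) + 1 := lt_of_le_of_lt (Nat.le_ceil x) (by rw [hm]; linarith)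
  set S := ∑' n : ℕ, (1/((n:ℝ)+1) - 1/((n:ℝ)+x)) with hS
  set T : ℕ → ℝ := fun N => -γ + ∑ k ∈ Finset.range N, (1/((k:ℝ)+1) - 1/((k:ℝ)+x)) with hT
  -- bounds
  have key : ∀ N : ℕ, T (N+1) - 1/((N:ℝ)+1) ≤ deriv f x ∧
      deriv f x ≤ T (N+1) + (m:ℝ) * (1/((N:ℝ)+1)) := by
    intro N
    have hshift := hder_shift (N+1) x hx
    have hTsum : T (N+1) = -γ + ((harmonic (N+1) : ℝ) - ∑ k ∈ Finset.range (N+1), 1/(x+k)) := by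
      simp only [hT, harm, ← Finset.sum_sub_distrib]
      congr 1
      exact Finset.sum_congr rfl fun k _ => by rw [add_comm x (k:ℝ)]
    have hlow : deriv f ((N:ℝ)+1) ≤ deriv f (x + (N+1:ℕ)) := by
      apply mono _ _ (by positivity)
      push_cast; linarith
    have hup : deriv f (x + (N+1:ℕ)) ≤ deriv f (((N+m+1:ℕ):ℝ)+1) := by
      apply mono _ _ (by positivity)
      push_cast; linarith
    rw [hpsi_nat N] at hlow
    rw [hpsi_nat (N+m+1)] at hup
    rw [hshift] at hlow hup
    have hharm_succ : (harmonic (N+1) : ℝ) = (harmonic N : ℝ) + 1/((N:ℝ)+1) := by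
      rw [harm, harm, Finset.sum_range_succ]
    have hharm_ub : (harmonic (N+m+1) : ℝ) - (harmonic (N+1) : ℝ) ≤ (m:ℝ) * (1/((N:ℝ)+1)) := by
      rw [harm, harm, ← Finset.sum_Ico_eq_sub _ (by omega)]
      calc ∑ i ∈ Finset.Ico (N+1) (N+m+1), 1/((i:ℝ)+1)
          ≤ ∑ _i ∈ Finset.Ico (N+1) (N+m+1), 1/((N:ℝ)+1) := by
            apply Finset.sum_le_sum
            intro i hi
            have h1 : N + 1 ≤ i := (Finset.mem_Ico.mp hi).1
            have h2 : (N:ℝ) + 1 ≤ (i:ℝ) + 1 := by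
              have : (N:ℝ) ≤ (i:ℝ) := by exact_mod_cast Nat.le_of_succ_le h1
              linarith
            exact one_div_le_one_div_of_le (by positivity) h2
        _ = (m:ℝ) * (1/((N:ℝ)+1)) := by
            rw [Finset.sum_const, Nat.card_Ico]
            have : N + m + 1 - (N+1) = m := by omega
            rw [this]; simp [mul_comm]
    constructor
    · rw [hTsum, hharm_succ]; linarith
    · rw [hTsum]; linarith
  have hsum := summable_psi_term_real x hx
  have hTlim : Tendsto (fun N => T (N+1)) atTop (𝓝 (-γ + S)) := by
    have h1 : Tendsto T atTop (𝓝 (-γ + S)) := Tendsto.const_add _ hsum.hasSum.tendsto_sum_nat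
    exact h1.comp (tendsto_add_atTop_nat 1)
  have hinv : Tendsto (fun N : ℕ => 1/((N:ℝ)+1)) atTop (𝓝 0) :=
    tendsto_one_div_add_atTop_nhds_zero_nat
  have hup2 : Tendsto (fun N => T (N+1) + (m:ℝ) * (1/((N:ℝ)+1))) atTop
      (𝓝 (-γ + S + (m:ℝ) * 0)) := hTlim.add (hinv.const_mul _)
  have hlow2 : Tendsto (fun N => T (N+1) - 1/((N:ℝ)+1)) atTop (𝓝 (-γ + S - 0)) :=
    hTlim.sub hinv
  have h1 : deriv f x ≤ -γ + S + (m:ℝ) * 0 := ge_of_tendsto' hup2 fun N => (key N).2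
  have h2 : -γ + S - 0 ≤ deriv f x := le_of_tendsto' hlow2 fun N => (key N).1
  simp only [mul_zero, add_zero, sub_zero] at h1 h2
  exact le_antisymm h1 h2

lemma deriv_Gamma_real_eq (x : ℝ) (hx : 0 < x) :
    deriv Real.Gamma x = Real.Gamma x *
      (-Real.eulerMascheroniConstant + ∑' n : ℕ, (1/((n:ℝ)+1) - 1/((n:ℝ)+x))) := by
  have h := deriv_log_Gamma_real x hx
  have hne : ∀ m : ℕ, x ≠ -(m:ℝ) := by
    intro m h'; have : (0:ℝ) ≤ (m:ℝ) := Nat.cast_nonneg m; rw [h'] at hx; linarith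
  rw [Function.comp_def, deriv.log (Real.differentiableAt_Gamma hne)
    (Real.Gamma_pos_of_pos hx).ne'] at h
  rw [div_eq_iff (Real.Gamma_pos_of_pos hx).ne'] at h
  rw [h]; ring

lemma deriv_Gamma_complex_ofReal (x : ℝ) (hx : 0 < x) :
    deriv Complex.Gamma (x:ℂ) = ((deriv Real.Gamma x : ℝ) : ℂ) := by
  have hneC : ∀ m : ℕ, (x:ℂ) ≠ -(m:ℂ) := by
    intro m h; have := congrArg Complex.re h
    simp at this; rw [this] at hx; linarith [Nat.cast_nonneg (α := ℝ) m]
  have hneR : ∀ m : ℕ, x ≠ -(m:ℝ) := by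
    intro m h'; have : (0:ℝ) ≤ (m:ℝ) := Nat.cast_nonneg m; rw [h'] at hx; linarith
  have hd : HasDerivAt Complex.Gamma (deriv Complex.Gamma (x:ℂ)) (x:ℂ) :=
    (Complex.differentiableAt_Gamma _ hneC).hasDerivAt
  have hc : HasDerivAt (fun t : ℝ => (x:ℂ) + (t:ℂ)) ((1:ℂ)) 0 := by
    have h0 : HasDerivAt (fun t : ℝ => (t:ℂ)) ((1:ℂ)) 0 := by
      exact Complex.ofRealCLM.hasDerivAt (x := (0:ℝ))
    simpa using h0.const_add (x:ℂ)
  have hcurve : HasDerivAt (fun t : ℝ => Complex.Gamma ((x:ℂ) + (t:ℂ)))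
      (deriv Complex.Gamma (x:ℂ)) 0 := by
    have := HasDerivAt.scomp_of_eq (0:ℝ) hd hc (by simp)
    simpa [Function.comp_def] using this
  have hg : HasDerivAt Real.Gamma (deriv Real.Gamma x) x :=
    (Real.differentiableAt_Gamma hneR).hasDerivAt
  have h1 : HasDerivAt (fun t : ℝ => Real.Gamma (x + t)) (deriv Real.Gamma x) 0 := by
    have := HasDerivAt.comp_of_eq (0:ℝ) hg ((hasDerivAt_id (0:ℝ)).const_add x) (by simp)
    simpa [Function.comp_def] using this
  have hcurve2 : HasDerivAt (fun t : ℝ => ((Real.Gamma (x + t) : ℝ) : ℂ))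
      (((deriv Real.Gamma x : ℝ)) : ℂ) 0 := h1.ofReal_comp
  have heq : (fun t : ℝ => Complex.Gamma ((x:ℂ) + (t:ℂ)))
      = fun t : ℝ => ((Real.Gamma (x + t) : ℝ) : ℂ) := by
    funext t
    rw [show (x:ℂ) + (t:ℂ) = ((x + t : ℝ) : ℂ) by push_cast; ring, Complex.Gamma_ofReal]
  rw [heq] at hcurve
  exact hcurve.unique hcurve2

lemma psiC_differentiableOn :
    DifferentiableOn ℂ (fun z => ∑' n : ℕ, (1/((n:ℂ)+1) - 1/((n:ℂ)+z))) {z : ℂ | 0 < z.re} := by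
  intro z₀ hz₀
  apply DifferentiableAt.differentiableWithinAt
  have hz₀' : 0 < z₀.re := hz₀
  set ε := z₀.re / 2 with hε'
  have hε : 0 < ε := half_pos hz₀'
  set t := Metric.ball z₀ ε with ht
  have hmem : ∀ z ∈ t, ε < z.re := by
    intro z hz
    have hd : ‖z - z₀‖ < ε := by
      rw [← Complex.dist_eq]; exact Metric.mem_ball.mp hz
    have h1 : -(‖z - z₀‖) ≤ (z - z₀).re := by
      have h := Complex.abs_re_le_norm (z - z₀)
      have h' := neg_abs_le (z - z₀).re
      linarith
    have h2 : (z - z₀).re = z.re - z₀.re := by simp [Complex.sub_re]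
    rw [h2] at h1
    have : z₀.re = 2 * ε := by rw [hε']; ring
    linarith
  have hne : ∀ (n : ℕ), ∀ z ∈ t, ((n:ℂ)+z) ≠ 0 := by
    intro n z hz h
    have := congrArg Complex.re h
    simp at this
    have h2 := hmem z hz
    linarith [Nat.cast_nonneg (α := ℝ) n]
  have hder : ∀ (n : ℕ), ∀ z ∈ t,
      HasDerivAt (fun z => 1/((n:ℂ)+1) - 1/((n:ℂ)+z)) ((((n:ℂ)+z)^2)⁻¹) z := by
    intro n z hz
    have h1 : HasDerivAt (fun z : ℂ => (n:ℂ)+z) 1 z := (hasDerivAt_id z).const_add _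
    have h2 := h1.inv (hne n z hz)
    have h3 := (hasDerivAt_const z (1/((n:ℂ)+1))).sub h2
    have : -(-1 / ((n:ℂ) + z) ^ 2) = (((n:ℂ)+z)^2)⁻¹ := by ring
    rw [← this]
    simpa [one_div, Pi.sub_def, Pi.inv_def] using h3
  have hbound : ∀ (n : ℕ), ∀ z ∈ t, ‖(((n:ℂ)+z)^2)⁻¹‖ ≤ (((n:ℝ)+ε)^2)⁻¹ := by
    intro n z hz
    rw [norm_inv, norm_pow]
    have h1 : (n:ℝ) + ε ≤ ‖(n:ℂ)+z‖ := by
      refine le_trans ?_ (Complex.re_le_norm _)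
      simp only [Complex.add_re, Complex.natCast_re]
      linarith [hmem z hz]
    have h2 : (0:ℝ) < (n:ℝ) + ε := by positivity
    apply inv_anti₀ (by positivity)
    exact pow_le_pow_left₀ (le_of_lt h2) h1 2
  have hu : Summable (fun n : ℕ => (((n:ℝ)+ε)^2)⁻¹) := by
    apply Summable.of_norm_bounded_eventually (g := fun n : ℕ => ((n:ℝ)^2)⁻¹)
    · have := Real.summable_one_div_nat_pow.mpr one_lt_two
      simpa [one_div] using this
    · rw [Nat.cofinite_eq_atTop]
      filter_upwards [Filter.eventually_ge_atTop 1] with n hn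
      have hn1 : (1:ℝ) ≤ n := by exact_mod_cast hn
      rw [Real.norm_eq_abs, abs_of_pos (by positivity)]
      apply inv_anti₀ (by positivity)
      nlinarith
  exact (hasDerivAt_tsum_of_isPreconnected hu Metric.isOpen_ball
    (convex_ball z₀ ε).isPreconnected hder hbound (Metric.mem_ball_self hε)
    (summable_psi_term z₀ hz₀') (Metric.mem_ball_self hε)).differentiableAt

lemma deriv_Gamma_complex (z : ℂ) (hz : 0 < z.re) :
    deriv Complex.Gamma z = Complex.Gamma z *
      (-(Real.eulerMascheroniConstant:ℂ) + ∑' n : ℕ, (1/((n:ℂ)+1) - 1/((n:ℂ)+z))) := by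
  set U : Set ℂ := {w : ℂ | 0 < w.re} with hU
  have hUopen : IsOpen U := isOpen_lt continuous_const Complex.continuous_re
  have hUconn : IsPreconnected U := (convex_halfSpace_re_gt 0).isPreconnected
  have hneU : ∀ w : ℂ, w ∈ U → ∀ m : ℕ, w ≠ -(m:ℂ) := by
    intro w hw m h
    have := congrArg Complex.re h
    simp at this
    have hw' : 0 < w.re := hw
    rw [this] at hw'
    linarith [Nat.cast_nonneg (α := ℝ) m]
  have hGanal : AnalyticOnNhd ℂ Complex.Gamma U :=
    DifferentiableOn.analyticOnNhd
      (fun w hw => (Complex.differentiableAt_Gamma w (hneU w hw)).differentiableWithinAt) hUopen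
  have hpsi : AnalyticOnNhd ℂ (fun w => ∑' n : ℕ, (1/((n:ℂ)+1) - 1/((n:ℂ)+w))) U :=
    psiC_differentiableOn.analyticOnNhd hUopen
  have hf : AnalyticOnNhd ℂ (deriv Complex.Gamma) U := hGanal.deriv
  have hg : AnalyticOnNhd ℂ (fun w => Complex.Gamma w *
      (-(Real.eulerMascheroniConstant:ℂ) + ∑' n : ℕ, (1/((n:ℂ)+1) - 1/((n:ℂ)+w)))) U :=
    hGanal.mul ((analyticOnNhd_const).add hpsi)
  have hreal : ∀ x : ℝ, 0 < x → deriv Complex.Gamma (x:ℂ) = Complex.Gamma (x:ℂ) *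
      (-(Real.eulerMascheroniConstant:ℂ) + ∑' n : ℕ, (1/((n:ℂ)+1) - 1/((n:ℂ)+(x:ℂ)))) := by
    intro x hx
    rw [deriv_Gamma_complex_ofReal x hx, Complex.Gamma_ofReal, deriv_Gamma_real_eq x hx]
    rw [Complex.ofReal_mul, Complex.ofReal_add, Complex.ofReal_neg, Complex.ofReal_tsum]
    congr 2
    apply tsum_congr
    intro n
    push_cast
    ring
  have heq : Set.EqOn (deriv Complex.Gamma) (fun w => Complex.Gamma w *
      (-(Real.eulerMascheroniConstant:ℂ) + ∑' n : ℕ, (1/((n:ℂ)+1) - 1/((n:ℂ)+w)))) U := by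
    apply hf.eqOn_of_preconnected_of_frequently_eq hg hUconn (z₀ := 1) (by simp [hU])
    have hseq : Filter.Tendsto (fun n : ℕ => ((1 + 1/((n:ℝ)+1) : ℝ) : ℂ)) Filter.atTop
        (𝓝[≠] (1:ℂ)) := by
      apply tendsto_nhdsWithin_of_tendsto_nhds_of_eventually_within
      · have h0 : Filter.Tendsto (fun n : ℕ => (1 + 1/((n:ℝ)+1) : ℝ)) Filter.atTop (𝓝 1) := by
          have := tendsto_one_div_add_atTop_nhds_zero_nat (𝕜 := ℝ)
          simpa using (this.const_add 1)
        have h1 := (Complex.continuous_ofReal.tendsto (1:ℝ)).comp h0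
        rw [show ((1:ℝ):ℂ) = (1:ℂ) by norm_num] at h1
        exact h1
      · filter_upwards with n
        simp only [Set.mem_compl_iff, Set.mem_singleton_iff]
        intro h
        rw [show (1:ℂ) = ((1:ℝ):ℂ) by norm_num] at h
        have := Complex.ofReal_injective h
        have hpos : 0 < 1/((n:ℝ)+1) := by positivity
        linarith
    apply hseq.frequently
    apply Filter.Frequently.of_forall
    intro n
    exact hreal _ (by positivity)
  exact heq hz

lemma hasDerivAt_log_abs {g : ℝ → ℂ} {g' : ℂ} {r : ℝ} (hg : HasDerivAt g g' r)
    (h0 : g r ≠ 0) :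
    HasDerivAt (fun r => Real.log (‖g r‖)) ((g' / g r).re) r := by
  have hfun : (fun r => Real.log (‖g r‖))
      = fun r => Real.log (Complex.normSq (g r)) / 2 := by
    funext s
    rw [Complex.norm_def, Real.log_sqrt (Complex.normSq_nonneg _)]
  rw [hfun]
  have hre : HasDerivAt (fun r => (g r).re) g'.re r :=
    Complex.reCLM.hasFDerivAt.comp_hasDerivAt r hg
  have him : HasDerivAt (fun r => (g r).im) g'.im r :=
    Complex.imCLM.hasFDerivAt.comp_hasDerivAt r hg
  have hsq : HasDerivAt (fun r => Complex.normSq (g r))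
      (g'.re * (g r).re + (g r).re * g'.re + (g'.im * (g r).im + (g r).im * g'.im)) r := by
    have h1 := (hre.mul hre).add (him.mul him)
    have heq : (fun r => Complex.normSq (g r))
        = fun r => (g r).re * (g r).re + (g r).im * (g r).im := by
      funext s; rw [Complex.normSq_apply]
    rw [heq]
    exact h1
  have hns : Complex.normSq (g r) ≠ 0 := by
    simpa [Complex.normSq_eq_zero] using h0
  have hlog := (hsq.log hns).div_const 2
  refine hlog.congr_deriv ?_
  rw [Complex.div_re]
  field_simp
  ring

lemma abs_pow_four (u : ℂ) : ‖u‖ ^ 4 = Complex.normSq u ^ 2 := by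
  have : ‖u‖ ^ 4 = (‖u‖ ^ 2) ^ 2 := by ring
  rw [this, Complex.sq_norm]

lemma term_eq {a : ℝ} (ha : 0 < a) {w u : ℂ} (hD : ((a:ℂ)^2 - u^2) ≠ 0) :
    (w * (-2*u^2/((a:ℂ)*((a:ℂ)^2 - u^2)))).re
      = 2 * (-(w*u^2).re * a^2 + w.re * ‖u‖ ^ 4)
          / (a * ‖(a:ℂ)^2 - u^2‖ ^ 2) := by
  set D : ℂ := (a:ℂ)^2 - u^2 with hDdef
  have ha' : ((a:ℂ)) ≠ 0 := by
    simpa using (Complex.ofReal_ne_zero.mpr ha.ne')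
  have hnsD : Complex.normSq D ≠ 0 := by simpa [Complex.normSq_eq_zero] using hD
  have hden2 : ((a * Complex.normSq D : ℝ) : ℂ) ≠ 0 := by
    rw [Complex.ofReal_ne_zero]
    exact mul_ne_zero ha.ne' hnsD
  have step1 : w * (-2*u^2/((a:ℂ)*D))
      = (-2*w*u^2*(starRingEnd ℂ) D) / ((a * Complex.normSq D : ℝ) : ℂ) := by
    rw [mul_div_assoc', div_eq_div_iff (mul_ne_zero ha' hD) hden2]
    push_cast
    linear_combination (2*w*u^2*(a:ℂ)) * (Complex.mul_conj D)
  have hu2 : u^2 * ((starRingEnd ℂ) u)^2 = ((Complex.normSq u : ℝ):ℂ)^2 := by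
    rw [← mul_pow, Complex.mul_conj]
  have hconjD : (starRingEnd ℂ) D = ((a:ℂ))^2 - ((starRingEnd ℂ) u)^2 := by
    rw [hDdef, map_sub, map_pow, map_pow, Complex.conj_ofReal]
  have hN : -2*w*u^2*(starRingEnd ℂ) D
      = (((-2:ℝ)):ℂ) * ((((a^2:ℝ)):ℂ) * (w*u^2) - (((Complex.normSq u^2:ℝ)):ℂ) * w) := by
    rw [hconjD]
    push_cast
    linear_combination (2*w)*hu2
  have sq_absD : ‖D‖ ^ 2 = Complex.normSq D := Complex.sq_norm D
  rw [step1, hN, Complex.div_ofReal_re, abs_pow_four, sq_absD]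
  have hre : ((((-2:ℝ)):ℂ) * ((((a^2:ℝ)):ℂ) * (w * u ^ 2) - (((Complex.normSq u ^ 2:ℝ)):ℂ) * w)).re
      = -2 * (a^2 * (w*u^2).re - Complex.normSq u^2 * w.re) := by
    simp only [Complex.mul_re, Complex.sub_re, Complex.sub_im, ← Complex.ofReal_pow,
      Complex.ofReal_re, Complex.ofReal_im]
    ring
  rw [hre]
  ring
noncomputable def digamma (z : ℝ) : ℝ :=
  -Real.eulerMascheroniConstant + ∑' n : ℕ, (1 / (n + 1) - 1 / (n + z))

theorem stmt9 (θ : ℝ) (hθ : 0 < θ) (G : ℂ → ℂ)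
    (hG : ∀ z, G z = Complex.log (Complex.Gamma z) - Complex.log (Complex.Gamma (θ - z))
        - 2 * (digamma (θ / 2) : ℂ) * z)
    (v : ℝ → ℂ) (hv : Differentiable ℝ v)
    (hpos : ∀ r : ℝ, 0 < ((θ / 2 : ℝ) + v r).re ∧ 0 < ((θ : ℂ) - ((θ / 2 : ℝ) + v r)).re)
    (r : ℝ) :
    deriv (fun r : ℝ => (G ((θ / 2 : ℝ) + v r)).re) r
      = 2 * ∑' n : ℕ,
          (-(deriv v r * (v r) ^ 2).re * ((n : ℝ) + θ / 2) ^ 2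
              + (deriv v r).re * ‖v r‖ ^ 4)
            / (((n : ℝ) + θ / 2) * ‖(((n : ℝ) + θ / 2 : ℝ) : ℂ) ^ 2 - (v r) ^ 2‖ ^ 2) := by
  set d : ℝ := digamma (θ/2) with hd
  set z₁ : ℂ := ((θ/2 : ℝ) : ℂ) + v r with hz₁def
  set z₂ : ℂ := (θ:ℂ) - z₁ with hz₂def
  have hz₁ : 0 < z₁.re := (hpos r).1
  have hz₂ : 0 < z₂.re := (hpos r).2
  have hne₁ : ∀ m : ℕ, z₁ ≠ -(m:ℂ) := by
    intro m h; rw [h] at hz₁; simp at hz₁; linarith [Nat.cast_nonneg (α := ℝ) m]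
  have hne₂ : ∀ m : ℕ, z₂ ≠ -(m:ℂ) := by
    intro m h; rw [h] at hz₂; simp at hz₂; linarith [Nat.cast_nonneg (α := ℝ) m]
  have hΓ₁ : Complex.Gamma z₁ ≠ 0 := Complex.Gamma_ne_zero hne₁
  have hΓ₂ : Complex.Gamma z₂ ≠ 0 := Complex.Gamma_ne_zero hne₂
  -- rewrite the function
  have hfun : (fun r : ℝ => (G ((θ/2 : ℝ) + v r)).re)
      = fun s : ℝ => Real.log (‖Complex.Gamma (((θ/2 : ℝ) : ℂ) + v s)‖)
          - Real.log (‖Complex.Gamma ((θ:ℂ) - (((θ/2 : ℝ) : ℂ) + v s))‖)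
          - (2*d) * ((((θ/2 : ℝ) : ℂ) + v s).re) := by
    funext s
    rw [hG]
    rw [Complex.sub_re, Complex.sub_re, Complex.log_re, Complex.log_re]
    have h2 : ((2 : ℂ) * (d:ℂ) * (((θ/2 : ℝ) : ℂ) + v s)).re
        = 2*d * ((((θ/2 : ℝ) : ℂ) + v s).re) := by
      simp [Complex.mul_re]
      try ring
    rw [h2]
  -- derivatives
  have hvd : HasDerivAt v (deriv v r) r := (hv r).hasDerivAt
  have hw : HasDerivAt (fun s : ℝ => ((θ/2 : ℝ) : ℂ) + v s) (deriv v r) r := hvd.const_add _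
  have hw2 : HasDerivAt (fun s : ℝ => (θ:ℂ) - (((θ/2 : ℝ) : ℂ) + v s)) (-(deriv v r)) r :=
    hw.const_sub (θ:ℂ)
  have hg₁ : HasDerivAt (fun s : ℝ => Complex.Gamma (((θ/2 : ℝ) : ℂ) + v s))
      (deriv v r • deriv Complex.Gamma z₁) r :=
    HasDerivAt.scomp_of_eq r (Complex.differentiableAt_Gamma _ hne₁).hasDerivAt hw rfl
  have hg₂ : HasDerivAt (fun s : ℝ => Complex.Gamma ((θ:ℂ) - (((θ/2 : ℝ) : ℂ) + v s)))
      ((-(deriv v r)) • deriv Complex.Gamma z₂) r :=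
    HasDerivAt.scomp_of_eq r (Complex.differentiableAt_Gamma _ hne₂).hasDerivAt hw2 rfl
  have hlog₁ := hasDerivAt_log_abs hg₁ (by rw [← hz₁def]; exact hΓ₁)
  have hlog₂ := hasDerivAt_log_abs hg₂ (by rw [← hz₂def]; exact hΓ₂)
  have hlin : HasDerivAt (fun s : ℝ => (2*d) * ((((θ/2 : ℝ) : ℂ) + v s).re))
      ((2*d) * (deriv v r).re) r :=
    (Complex.reCLM.hasFDerivAt.comp_hasDerivAt r hw).const_mul (2*d)
  have Htot := (hlog₁.sub hlog₂).sub hlin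
  simp only [Pi.sub_def] at Htot
  rw [hfun, Htot.deriv]
  -- now pure algebra/series
  have hrw : ((θ/2:ℝ):ℂ) + v r = z₁ := rfl
  have hrw2 : (θ:ℂ) - (((θ/2:ℝ):ℂ) + v r) = z₂ := rfl
  rw [hrw, hrw2]
  set A := deriv v r with hA
  set u := v r with huu
  set γ := Real.eulerMascheroniConstant with hγ
  have hdiv₁ : (A • deriv Complex.Gamma z₁) / Complex.Gamma z₁
      = A * (-(γ:ℂ) + ∑' n : ℕ, (1/((n:ℂ)+1) - 1/((n:ℂ)+z₁))) := by
    rw [deriv_Gamma_complex z₁ hz₁, smul_eq_mul]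
    field_simp
    ring
  have hdiv₂ : ((-A) • deriv Complex.Gamma z₂) / Complex.Gamma z₂
      = -(A * (-(γ:ℂ) + ∑' n : ℕ, (1/((n:ℂ)+1) - 1/((n:ℂ)+z₂)))) := by
    rw [deriv_Gamma_complex z₂ hz₂, smul_eq_mul]
    field_simp
    ring
  rw [hdiv₁, hdiv₂, Complex.neg_re, sub_neg_eq_add]
  have hzc : (0:ℝ) < θ/2 := by linarith
  have hsum₁ := summable_psi_term z₁ hz₁
  have hsum₂ := summable_psi_term z₂ hz₂
  have hsumc := summable_psi_term (((θ/2:ℝ)):ℂ) (by simpa using hzc)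
  have hdC : (d:ℂ) = -(γ:ℂ) + ∑' n : ℕ, (1/((n:ℂ)+1) - 1/((n:ℂ)+((θ/2:ℝ):ℂ))) := by
    rw [hd, digamma, hγ]
    rw [Complex.ofReal_add, Complex.ofReal_neg, Complex.ofReal_tsum]
    congr 1
    apply tsum_congr
    intro n
    push_cast
    ring
  set a : ℕ → ℂ := fun n => ((((n:ℝ) + θ/2 : ℝ)):ℂ) with ha
  have hapos : ∀ n : ℕ, (0:ℝ) < (n:ℝ) + θ/2 := fun n => by positivity
  have hz₁re : z₁.re = θ/2 + u.re := by rw [hz₁def]; simp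
  have hz₂re : z₂.re = θ/2 - u.re := by rw [hz₂def, hz₁def]; simp; ring
  have hane₁ : ∀ n : ℕ, a n + u ≠ 0 := by
    intro n h
    have h' := congrArg Complex.re h
    simp [ha] at h'
    have : ((n:ℝ) + θ/2) + u.re > 0 := by
      have := hz₁re ▸ hz₁
      have hn : (0:ℝ) ≤ (n:ℝ) := Nat.cast_nonneg n
      linarith
    linarith
  have hane₂ : ∀ n : ℕ, a n - u ≠ 0 := by
    intro n h
    have h' := congrArg Complex.re h
    simp [ha] at h'
    have : ((n:ℝ) + θ/2) - u.re > 0 := by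
      have := hz₂re ▸ hz₂
      have hn : (0:ℝ) ≤ (n:ℝ) := Nat.cast_nonneg n
      linarith
    linarith
  have hane₀ : ∀ n : ℕ, a n ≠ 0 := by
    intro n h
    have h' := congrArg Complex.re h
    simp [ha] at h'
    have := hapos n
    linarith
  have hD : ∀ n : ℕ, (a n)^2 - u^2 ≠ 0 := by
    intro n
    rw [sq_sub_sq]
    exact mul_ne_zero (hane₁ n) (hane₂ n)
  have hcast₁ : ∀ n : ℕ, (n:ℂ) + z₁ = a n + u := by
    intro n; rw [hz₁def, ha]; push_cast; ring
  have hcast₂ : ∀ n : ℕ, (n:ℂ) + z₂ = a n - u := by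
    intro n; rw [hz₂def, hz₁def, ha]; push_cast; ring
  have hcastc : ∀ n : ℕ, (n:ℂ) + ((θ/2:ℝ):ℂ) = a n := by
    intro n; rw [ha]; push_cast; ring
  set t : ℕ → ℂ := fun n => -2*u^2/(a n * ((a n)^2 - u^2)) with htdef
  have hterm : ∀ n : ℕ, (1/((n:ℂ)+1) - 1/((n:ℂ)+z₁)) + (1/((n:ℂ)+1) - 1/((n:ℂ)+z₂))
      - 2 * (1/((n:ℂ)+1) - 1/((n:ℂ)+((θ/2:ℝ):ℂ))) = t n := by
    intro n
    rw [hcast₁, hcast₂, hcastc, htdef]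
    have e1 := hane₁ n
    have e2 := hane₂ n
    have e0 := hane₀ n
    have eD := hD n
    field_simp
    ring
  have hsumt : Summable t := by
    have := (hsum₁.add hsum₂).sub (hsumc.mul_left 2)
    apply this.congr
    intro n
    exact hterm n
  have hkey : (A * (-(γ:ℂ) + ∑' n : ℕ, (1/((n:ℂ)+1) - 1/((n:ℂ)+z₁)))).re
        + (A * (-(γ:ℂ) + ∑' n : ℕ, (1/((n:ℂ)+1) - 1/((n:ℂ)+z₂)))).re - 2*d*A.re
      = ∑' n : ℕ, (A * t n).re := by
    have hsplit : (-(γ:ℂ) + ∑' n : ℕ, (1/((n:ℂ)+1) - 1/((n:ℂ)+z₁)))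
          + (-(γ:ℂ) + ∑' n : ℕ, (1/((n:ℂ)+1) - 1/((n:ℂ)+z₂))) - 2*(d:ℂ)
        = ∑' n : ℕ, t n := by
      rw [hdC]
      have hstep : (-(γ:ℂ) + ∑' n : ℕ, (1/((n:ℂ)+1) - 1/((n:ℂ)+z₁)))
            + (-(γ:ℂ) + ∑' n : ℕ, (1/((n:ℂ)+1) - 1/((n:ℂ)+z₂)))
            - 2*(-(γ:ℂ) + ∑' n : ℕ, (1/((n:ℂ)+1) - 1/((n:ℂ)+((θ/2:ℝ):ℂ))))
          = ((∑' n : ℕ, (1/((n:ℂ)+1) - 1/((n:ℂ)+z₁)))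
              + ∑' n : ℕ, (1/((n:ℂ)+1) - 1/((n:ℂ)+z₂)))
            - ∑' n : ℕ, 2 * (1/((n:ℂ)+1) - 1/((n:ℂ)+((θ/2:ℝ):ℂ))) := by
        rw [tsum_mul_left]
        ring
      rw [hstep, ← Summable.tsum_add hsum₁ hsum₂, ← Summable.tsum_sub (hsum₁.add hsum₂) (hsumc.mul_left 2)]
      apply tsum_congr
      intro n
      exact hterm n
    have hre : (A * ∑' n : ℕ, t n).re = ∑' n : ℕ, (A * t n).re := by
      rw [← tsum_mul_left]
      exact Complex.re_tsum (hsumt.mul_left A)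
    have h2 : (A * (2*(d:ℂ))).re = 2*d*A.re := by
      simp [Complex.mul_re]
      try ring
    have expand : (A * ((-(γ:ℂ) + ∑' n : ℕ, (1/((n:ℂ)+1) - 1/((n:ℂ)+z₁)))
          + (-(γ:ℂ) + ∑' n : ℕ, (1/((n:ℂ)+1) - 1/((n:ℂ)+z₂))) - 2*(d:ℂ))).re
        = (A * (-(γ:ℂ) + ∑' n : ℕ, (1/((n:ℂ)+1) - 1/((n:ℂ)+z₁)))).re
          + (A * (-(γ:ℂ) + ∑' n : ℕ, (1/((n:ℂ)+1) - 1/((n:ℂ)+z₂)))).re - (A * (2*(d:ℂ))).re := by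
      rw [mul_sub, mul_add, Complex.sub_re, Complex.add_re]
    rw [← h2, ← expand, hsplit, hre]
  rw [hkey, ← tsum_mul_left]
  apply tsum_congr
  intro n
  have h := term_eq (hapos n) (a := (n:ℝ) + θ/2) (w := A) (u := u) (hD n)
  conv_rhs => rw [← mul_div_assoc]
  exact h
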